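/- Let W ∈ R^{d×n} be a matrix with rows w_1,…,w_d, let x ∈ R^n_{≥0}, x⁰ ∈ R^n_{>0} with Wx = Wx⁰, and let y^{(1)},…,y^{(p)} ∈ R^n_{≥0}, u ∈ R^p_{≥0}. Define W̄(x,u) = Wx + Σ_k u_k W y^{(k)}. Then there exist α₁,…,α_p > 0 with x⁰ − Σ_k α_k y^{(k)} ∈ R^n_{>0}, and setting (x⁰)' = x⁰ − Σ_k α_k y^{(k)} and (u⁰)'_k = u_k + α_k, the point ((x⁰)', (u⁰)') is strictly positive (in both factors) and satisfies W̄((x⁰)',(u⁰)') = W̄(x,u). -/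

import Mathlib

/-- Lifting direction for relevant boundary steady states: given Wx = Wx⁰ with x⁰ > 0,
nonnegative complexes y^{(k)} and nonnegative u, there are small α_k > 0 so that
(x⁰ − Σ α_k y^{(k)}, u + α) is strictly positive and has the same extended conserved
quantities as (x,u). -/
theorem stmt_18 {d n p : ℕ} (W : Matrix (Fin d) (Fin n) ℝ)
    (x : Fin n → ℝ) (hx : ∀ j, 0 ≤ x j)
    (x0 : Fin n → ℝ) (hx0 : ∀ j, 0 < x0 j)
    (hW : W.mulVec x = W.mulVec x0)
    (y : Fin p → Fin n → ℝ) (hy : ∀ k j, 0 ≤ y k j)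
    (u : Fin p → ℝ) (hu : ∀ k, 0 ≤ u k) :
    ∃ α : Fin p → ℝ, (∀ k, 0 < α k) ∧
      (∀ j, 0 < x0 j - ∑ k, α k * y k j) ∧
      (∀ k, 0 < u k + α k) ∧
      W.mulVec (fun j => x0 j - ∑ k, α k * y k j)
          + ∑ k, (u k + α k) • W.mulVec (y k)
        = W.mulVec x + ∑ k, u k • W.mulVec (y k) := by
  set S : Fin n → ℝ := fun j => ∑ k, y k j with hS
  have hSnn : ∀ j, 0 ≤ S j := fun j => Finset.sum_nonneg fun k _ => hy k j
  obtain ⟨ε, hε, hεlt⟩ : ∃ ε : ℝ, 0 < ε ∧ ∀ j, ε * S j < x0 j := by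
    rcases isEmpty_or_nonempty (Fin n) with h | h
    · exact ⟨1, one_pos, fun j => h.elim j⟩
    · set f : Fin n → ℝ := fun j => x0 j / (S j + 1) with hf
      have hfpos : ∀ j, 0 < f j := fun j =>
        div_pos (hx0 j) (by linarith [hSnn j])
      refine ⟨Finset.univ.inf' Finset.univ_nonempty f, ?_, ?_⟩
      · exact (Finset.lt_inf'_iff _).2 fun j _ => hfpos j
      · intro j
        have h1 : Finset.univ.inf' Finset.univ_nonempty f ≤ f j :=
          Finset.inf'_le _ (Finset.mem_univ j)
        have h2 : f j * S j < f j * (S j + 1) := by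
          have := hfpos j; nlinarith
        have h3 : f j * (S j + 1) = x0 j := by
          exact div_mul_cancel₀ _ (by linarith [hSnn j] : S j + 1 ≠ 0)
        calc Finset.univ.inf' Finset.univ_nonempty f * S j
            ≤ f j * S j := mul_le_mul_of_nonneg_right h1 (hSnn j)
          _ < x0 j := h3 ▸ h2
  refine ⟨fun _ => ε, fun _ => hε, ?_, fun k => by linarith [hu k], ?_⟩
  · intro j
    have : ∑ k, ε * y k j = ε * S j := by rw [hS, Finset.mul_sum]
    rw [this]; linarith [hεlt j]
  · have hfun : (fun j => x0 j - ∑ k, ε * y k j) = x0 - ∑ k, ε • y k := by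
      funext j
      simp [Finset.sum_apply]
    have hsum : W.mulVec (∑ k, ε • y k) = ∑ k, ε • W.mulVec (y k) := by
      simp [← Matrix.mulVecLin_apply, map_sum, map_smul, - Matrix.mulVecBilin_apply]
    rw [hfun, Matrix.mulVec_sub, hsum, hW]
    have : ∀ k : Fin p, (u k + ε) • W.mulVec (y k)
        = u k • W.mulVec (y k) + ε • W.mulVec (y k) := fun k => add_smul _ _ _
    simp only [this, Finset.sum_add_distrib]
    abel
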